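/- Let T be a bounded linear operator on a Hilbert space with polar decomposition T = U|T| (U an isometry) and λ ∈ (0,1). Then T is quasi-hyperbolic if and only if its λ-Aluthge transform Δ_λ(T) = |T|^λ U |T|^{1-λ} is quasi-hyperbolic. -/

import Mathlib

set_option synthInstance.maxHeartbeats 1000000

/-- `T` is quasi-hyperbolic if for some `n`, `max (‖T^{2n} x‖, ‖x‖) ≥ 2‖T^n x‖` for all `x`. -/
def QuasiHyperbolic {H : Type*} [NormedAddCommGroup H] [InnerProductSpace ℂ H]
    [CompleteSpace H] (T : H →L[ℂ] H) : Prop :=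
  ∃ n : ℕ, ∀ x : H, 2 * ‖(T ^ n) x‖ ≤ max ‖(T ^ (2 * n)) x‖ ‖x‖

open scoped NNReal

section SeqLemma

variable (a : ℕ → ℝ)

private lemma seq_step (h0 : ∀ j, 0 ≤ a j)
    (h : ∀ j, 2 * a (j + 1) ≤ max (a (j + 1 + 1)) (a j)) (i : ℕ)
    (hi : 2 * a (i + 1) ≤ a (i + 1 + 1)) :
    ∀ q, 2 * a (i + q + 1) ≤ a (i + q + 1 + 1) := by
  intro q
  induction q with
  | zero => exact hi
  | succ q ih =>
    set j := i + q + 1 with hj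
    show 2 * a (j + 1) ≤ a (j + 1 + 1)
    rcases max_choice (a (j + 1 + 1)) (a j) with hm | hm
    · have hk := h j; rw [hm] at hk; exact hk
    · have hk := h j; rw [hm] at hk
      have := h0 (j + 1 + 1)
      linarith

private lemma chain_pow (i : ℕ) (hstep : ∀ q, 2 * a (i + q) ≤ a (i + q + 1)) :
    ∀ q, 2 ^ q * a i ≤ a (i + q) := by
  intro q
  induction q with
  | zero => simp
  | succ q ih =>
    have h1 := hstep q
    calc 2 ^ (q + 1) * a i = 2 * (2 ^ q * a i) := by ring
    _ ≤ 2 * a (i + q) := by linarith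
    _ ≤ a (i + q + 1) := h1

private lemma seq_main (h0 : ∀ j, 0 ≤ a j)
    (h : ∀ j, 2 * a (j + 1) ≤ max (a (j + 1 + 1)) (a j)) (k p : ℕ) :
    a k ≤ max (a 0 / 2 ^ k) (a (k + p) / 2 ^ p) := by
  induction k generalizing p with
  | zero =>
    refine le_trans ?_ (le_max_left _ _)
    simp
  | succ k ih =>
    have h2p : (0:ℝ) < 2 ^ p := by positivity
    rcases max_choice (a (k + 1 + 1)) (a k) with hm | hm
    · -- right chain from k+1
      have hk := h k; rw [hm] at hk
      have hstep : ∀ q, 2 * a (k + 1 + q) ≤ a (k + 1 + q + 1) := by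
        intro q
        have := seq_step a h0 h k hk q
        have e : k + q + 1 = k + 1 + q := by omega
        rw [e] at this
        exact this
      have hp := chain_pow a (k + 1) hstep p
      refine le_trans ?_ (le_max_right _ _)
      rw [le_div_iff₀ h2p]
      linarith [hp]
    · -- left step
      have hk := h k; rw [hm] at hk
      have ihp := ih (p + 1)
      have e : k + (p + 1) = k + 1 + p := by omega
      rw [e] at ihp
      rcases max_choice (a 0 / 2 ^ k) (a (k + 1 + p) / 2 ^ (p + 1)) with hm2 | hm2 <;>
        rw [hm2] at ihp
      · refine le_trans ?_ (le_max_left _ _)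
        have h2k : (0:ℝ) < 2 ^ k := by positivity
        rw [le_div_iff₀ (by positivity : (0:ℝ) < 2 ^ (k+1))]
        rw [le_div_iff₀ h2k] at ihp
        have : (2:ℝ) ^ (k + 1) = 2 * 2 ^ k := by ring
        rw [this]
        nlinarith [h2k, h0 (k+1)]
      · refine le_trans ?_ (le_max_right _ _)
        have h2p1 : (0:ℝ) < 2 ^ (p+1) := by positivity
        rw [le_div_iff₀ h2p]
        rw [le_div_iff₀ h2p1] at ihp
        have e2 : (2:ℝ) ^ (p + 1) = 2 * 2 ^ p := by ring
        rw [e2] at ihp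
        nlinarith [h2p, h0 (k + 1)]

end SeqLemma

section Transfer

variable {H : Type*} [NormedAddCommGroup H] [InnerProductSpace ℂ H] [CompleteSpace H]

private lemma qh_iter (S : H →L[ℂ] H) {n : ℕ}
    (hn : ∀ x : H, 2 * ‖(S ^ n) x‖ ≤ max ‖(S ^ (2 * n)) x‖ ‖x‖) (x : H) (k p : ℕ) :
    ‖(S ^ (k * n)) x‖ ≤ max (‖x‖ / 2 ^ k) (‖(S ^ ((k + p) * n)) x‖ / 2 ^ p) := by
  set a : ℕ → ℝ := fun j => ‖(S ^ (j * n)) x‖ with ha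
  have h0 : ∀ j, 0 ≤ a j := fun j => norm_nonneg _
  have h : ∀ j, 2 * a (j + 1) ≤ max (a (j + 1 + 1)) (a j) := by
    intro j
    have e1 : (S ^ ((j + 1) * n)) x = (S ^ n) ((S ^ (j * n)) x) := by
      rw [show (j + 1) * n = n + j * n by ring, pow_add, ContinuousLinearMap.mul_apply]
    have e2 : (S ^ ((j + 1 + 1) * n)) x = (S ^ (2 * n)) ((S ^ (j * n)) x) := by
      rw [show (j + 1 + 1) * n = 2 * n + j * n by ring, pow_add,
        ContinuousLinearMap.mul_apply]
    simpa only [ha, e1, e2] using hn ((S ^ (j * n)) x)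
  have := seq_main a h0 h k p
  simpa only [ha, Nat.zero_mul, pow_zero, ContinuousLinearMap.one_apply] using this

private lemma transfer (S W B : H →L[ℂ] H) (c c' : ℝ) (hc : 0 ≤ c) (hc' : 0 ≤ c')
    (h1 : ∀ (k : ℕ) (x : H), ‖(W ^ (k + 1)) x‖ ≤ c * ‖(S ^ k) (B x)‖)
    (h2 : ∀ (q : ℕ) (x : H), ‖(S ^ q) (B x)‖ ≤ c' * ‖(W ^ q) x‖)
    (hS : QuasiHyperbolic S) : QuasiHyperbolic W := by
  obtain ⟨n, hn⟩ := hS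
  rcases Nat.eq_zero_or_pos n with hn0 | hn0
  · -- degenerate: the space is trivial
    subst hn0
    have hzero : ∀ x : H, ‖x‖ = 0 := by
      intro x
      have := hn x
      simp only [pow_zero, ContinuousLinearMap.one_apply, Nat.mul_zero, max_self] at this
      linarith [norm_nonneg x]
    refine ⟨1, fun x => ?_⟩
    have hx : x = 0 := norm_eq_zero.mp (hzero x)
    simp [hx]
  · -- main case
    obtain ⟨m, rfl⟩ : ∃ m, n = m + 1 := ⟨n - 1, by omega⟩
    set n := m + 1 with hnm
    set D : ℝ := ‖W ^ (2 * m)‖ with hD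
    obtain ⟨k, hk⟩ := pow_unbounded_of_one_lt (R := ℝ) (2 * c * c' * max D 1)
      (by norm_num : (1:ℝ) < 2)
    refine ⟨k * n + 1, fun x => ?_⟩
    have hD0 : 0 ≤ D := norm_nonneg _
    have hmax1 : (1:ℝ) ≤ max D 1 := le_max_right _ _
    have hkey := qh_iter S hn (B x) k (k + 2)
    have hBx : ‖B x‖ ≤ c' * ‖x‖ := by
      have := h2 0 x
      simpa only [pow_zero, ContinuousLinearMap.one_apply] using this
    -- identify high power
    have epow : (k + (k + 2)) * n = (2 * m) + 2 * (k * n + 1) := by rw [hnm]; ring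
    have hhigh : ‖(S ^ ((k + (k + 2)) * n)) (B x)‖
        ≤ c' * (D * ‖(W ^ (2 * (k * n + 1))) x‖) := by
      refine le_trans (h2 _ x) ?_
      have : (W ^ ((k + (k + 2)) * n)) x = (W ^ (2 * m)) ((W ^ (2 * (k * n + 1))) x) := by
        rw [epow, pow_add, ContinuousLinearMap.mul_apply]
      rw [this]
      exact mul_le_mul_of_nonneg_left (ContinuousLinearMap.le_opNorm _ _) hc'
    have hW1 := h1 (k * n) x
    have h2k : (0:ℝ) < 2 ^ k := by positivity
    have h2k2 : (0:ℝ) < 2 ^ (k + 2) := by positivity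
    -- put it together
    have step1 : 2 * ‖(W ^ (k * n + 1)) x‖ ≤ 2 * c *
        max (‖B x‖ / 2 ^ k) (‖(S ^ ((k + (k + 2)) * n)) (B x)‖ / 2 ^ (k + 2)) := by
      calc 2 * ‖(W ^ (k * n + 1)) x‖ ≤ 2 * (c * ‖(S ^ (k * n)) (B x)‖) := by linarith
      _ = 2 * c * ‖(S ^ (k * n)) (B x)‖ := by ring
      _ ≤ _ := mul_le_mul_of_nonneg_left hkey (by linarith)
    have bound1 : 2 * c * (‖B x‖ / 2 ^ k) ≤ ‖x‖ := by
      rw [mul_div_assoc']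
      rw [div_le_iff₀ h2k]
      have hx0 := norm_nonneg x
      have c1 : 2 * c * ‖B x‖ ≤ 2 * c * (c' * ‖x‖) :=
        mul_le_mul_of_nonneg_left hBx (by linarith)
      have hcc' : (0:ℝ) ≤ 2 * c * c' := by positivity
      have c2 : 2 * c * c' ≤ 2 ^ k :=
        le_trans (by nlinarith [mul_nonneg hcc' (sub_nonneg.mpr hmax1)]) hk.le
      nlinarith
    have bound2 : 2 * c * (‖(S ^ ((k + (k + 2)) * n)) (B x)‖ / 2 ^ (k + 2))
        ≤ ‖(W ^ (2 * (k * n + 1))) x‖ := by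
      rw [mul_div_assoc']
      rw [div_le_iff₀ h2k2]
      have hy0 := norm_nonneg ((W ^ (2 * (k * n + 1))) x)
      have hS0 := norm_nonneg ((S ^ ((k + (k + 2)) * n)) (B x))
      have c1 : 2 * c * ‖(S ^ ((k + (k + 2)) * n)) (B x)‖
          ≤ 2 * c * (c' * (D * ‖(W ^ (2 * (k * n + 1))) x‖)) :=
        mul_le_mul_of_nonneg_left hhigh (by linarith)
      have hcc' : (0:ℝ) ≤ 2 * c * c' := by positivity
      have c2 : 2 * c * c' * D ≤ 2 ^ k :=
        le_trans (mul_le_mul_of_nonneg_left (le_max_left D 1) hcc') hk.le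
      have c3 : (2:ℝ) ^ k ≤ 2 ^ (k + 2) := by
        apply pow_le_pow_right₀ (by norm_num) (by omega)
      nlinarith
    calc 2 * ‖(W ^ (k * n + 1)) x‖
        ≤ max (2 * c * (‖B x‖ / 2 ^ k))
          (2 * c * (‖(S ^ ((k + (k + 2)) * n)) (B x)‖ / 2 ^ (k + 2))) := by
          rw [← mul_max_of_nonneg _ _ (by linarith : (0:ℝ) ≤ 2 * c)]
          exact step1
      _ ≤ max ‖(W ^ (2 * (k * n + 1))) x‖ ‖x‖ := by
          apply max_le
          · exact le_trans bound1 (le_max_right _ _)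
          · exact le_trans bound2 (le_max_left _ _)

end Transfer

section Main

variable {H : Type*} [NormedAddCommGroup H] [InnerProductSpace ℂ H] [CompleteSpace H]

set_option maxHeartbeats 1000000 in
private lemma rpow_mul_rpow (R : H →L[ℂ] H) {l l' : ℝ} (hl0 : 0 < l) (hl1 : 0 < l')
    (hll : l + l' = 1) (hR : 0 ≤ R) : CFC.rpow R l * CFC.rpow R l' = R := by
  unfold CFC.rpow
  rw [← cfc_mul (fun z : ℝ≥0 => z ^ l) (fun z : ℝ≥0 => z ^ l') R
    ((NNReal.continuous_rpow_const hl0.le).continuousOn)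
    ((NNReal.continuous_rpow_const hl1.le).continuousOn)]
  have : (fun z : ℝ≥0 => z ^ l * z ^ l') = fun z : ℝ≥0 => z := by
    funext z
    rw [← NNReal.rpow_add' (x := z) (by rw [hll]; norm_num)]
    rw [hll]
    simp
  rw [this, cfc_id' ℝ≥0 R]

end Main

open ContinuousLinearMap in
/-- For `T = U|T|` with `U` an isometry and `λ ∈ (0,1)`, `T` is quasi-hyperbolic iff
its `λ`-Aluthge transform `Δ_λ(T) = |T|^λ U |T|^{1-λ}` is quasi-hyperbolic. -/
theorem quasiHyperbolic_iff_lambda_aluthge {H : Type*} [NormedAddCommGroup H]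
    [InnerProductSpace ℂ H] [CompleteSpace H] (T U R : H →L[ℂ] H) (l : ℝ)
    (hl : l ∈ Set.Ioo (0 : ℝ) 1)
    (hR : 0 ≤ R) (hR2 : R * R = adjoint T * T) (hT : T = U * R)
    (hU : ∀ x : H, ‖U x‖ = ‖x‖) :
    QuasiHyperbolic T ↔ QuasiHyperbolic (CFC.rpow R l * U * CFC.rpow R (1 - l)) := by
  obtain ⟨hl0, hl1⟩ := hl
  set B : H →L[ℂ] H := CFC.rpow R l with hB
  set B' : H →L[ℂ] H := CFC.rpow R (1 - l) with hB'
  have hBB' : B * B' = R := rpow_mul_rpow R hl0 (by linarith) (by ring) hR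
  have hB'B : B' * B = R := rpow_mul_rpow R (by linarith) hl0 (by ring) hR
  set A : H →L[ℂ] H := U * B' with hA
  set Δ : H →L[ℂ] H := B * U * B' with hΔ
  have hΔBA : Δ = B * A := by rw [hΔ, hA, mul_assoc]
  have hΔB : Δ * B = B * T := by
    rw [hΔ, hT]
    rw [mul_assoc, mul_assoc, hB'B, ← mul_assoc]
  have hTA : T * A = A * Δ := by
    rw [hT, hA, hΔ]
    calc U * R * (U * B') = U * (B' * B) * (U * B') := by rw [hB'B]
    _ = U * B' * (B * U * B') := by noncomm_ring
  have hΔBq : ∀ q : ℕ, Δ ^ q * B = B * T ^ q := by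
    intro q
    induction q with
    | zero => simp
    | succ q ih =>
      rw [pow_succ, pow_succ, mul_assoc, hΔB, ← mul_assoc, ih, mul_assoc]
  have hTAq : ∀ q : ℕ, T ^ q * A = A * Δ ^ q := by
    intro q
    induction q with
    | zero => simp
    | succ q ih =>
      rw [pow_succ', pow_succ', mul_assoc, ih, ← mul_assoc, hTA, mul_assoc]
  constructor
  · -- T quasi-hyperbolic → Δ quasi-hyperbolic
    intro hQT
    refine transfer T Δ A ‖B‖ ‖A‖ (norm_nonneg _) (norm_nonneg _) ?_ ?_ hQT
    · intro k y
      have e : (Δ ^ (k + 1)) y = B ((T ^ k) (A y)) := by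
        have : Δ ^ (k + 1) = B * T ^ k * A := by
          calc Δ ^ (k + 1) = Δ ^ k * Δ := pow_succ Δ k
          _ = Δ ^ k * (B * A) := congrArg (fun z => Δ ^ k * z) hΔBA
          _ = (Δ ^ k * B) * A := by rw [mul_assoc]
          _ = B * T ^ k * A := by rw [hΔBq k]
        rw [this]
        simp [ContinuousLinearMap.mul_apply]
      rw [e]
      exact B.le_opNorm _
    · intro q y
      have e : (T ^ q) (A y) = A ((Δ ^ q) y) := by
        have := hTAq q
        calc (T ^ q) (A y) = (T ^ q * A) y := by simp [ContinuousLinearMap.mul_apply]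
        _ = (A * Δ ^ q) y := by rw [this]
        _ = A ((Δ ^ q) y) := by simp [ContinuousLinearMap.mul_apply]
      rw [e]
      exact A.le_opNorm _
  · -- Δ quasi-hyperbolic → T quasi-hyperbolic
    intro hQΔ
    refine transfer Δ T B ‖B'‖ ‖B‖ (norm_nonneg _) (norm_nonneg _) ?_ ?_ hQΔ
    · intro k x
      have e : (T ^ (k + 1)) x = U (B' ((Δ ^ k) (B x))) := by
        have : T ^ (k + 1) = U * B' * (Δ ^ k * B) := by
          rw [hΔBq k, pow_succ', hT, ← hB'B]
          noncomm_ring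
        rw [this]
        simp [ContinuousLinearMap.mul_apply]
      rw [e, hU]
      exact B'.le_opNorm _
    · intro q x
      have e : (Δ ^ q) (B x) = B ((T ^ q) x) := by
        have := hΔBq q
        calc (Δ ^ q) (B x) = (Δ ^ q * B) x := by simp [ContinuousLinearMap.mul_apply]
        _ = (B * T ^ q) x := by rw [this]
        _ = B ((T ^ q) x) := by simp [ContinuousLinearMap.mul_apply]
      rw [e]
      exact B.le_opNorm _
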